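/- arXiv:2001.02658 — 6 statements merged into one kernel-verified Lean document; each statement's English description precedes it below -/
import Mathlib

section
/- Let n ≥ 1, β > 0, ρ > 0, and let φ : ℝ → ℝ be an admissible φ-divergence generator: φ is twice continuously differentiable on [0,n], ρ-strongly convex on [0,n], φ(z) ≥ 0 for all z, φ(1) = 0 and φ'(1) = 0. Let v, v' ∈ ℝ^n, let p ∈ Δ_n maximize f_v(q) = ⟨v, q⟩ − (1/(βn)) Σ_i φ(n q_i) over Δ_n, and let p' ∈ Δ_n maximize f_{v'} over Δ_n. Then ‖p − p'‖ ≤ (β/(nρ)) ‖v − v'‖, where ‖·‖ is the Euclidean norm on ℝ^n. (That is, the gradient of the distributionally robust loss R is (β/(nρ))-Lipschitz continuous.) -/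
open Finset

/-- Strong concavity implies maximizers are "quadratically" better. -/
lemma key_ineq
    (n : ℕ) (hn : 1 ≤ n) (β ρ : ℝ) (hβ : 0 < β) (hρ : 0 < ρ)
    (φ : ℝ → ℝ)
    (hsc : ∀ z ∈ Set.Icc (0:ℝ) (n:ℝ), ∀ z' ∈ Set.Icc (0:ℝ) (n:ℝ),
      φ z + deriv φ z * (z' - z) + ρ / 2 * (z - z')^2 ≤ φ z')
    (f : (Fin n → ℝ) → (Fin n → ℝ) → ℝ)
    (hf : ∀ v q, f v q = ∑ i, v i * q i - (1 / (β * n)) * ∑ i, φ (n * q i))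
    (w r q : Fin n → ℝ)
    (hr : r ∈ stdSimplex ℝ (Fin n))
    (hmax : ∀ q ∈ stdSimplex ℝ (Fin n), f w q ≤ f w r)
    (hq : q ∈ stdSimplex ℝ (Fin n)) :
    f w q + (ρ * n / (2 * β)) * ∑ i, (r i - q i)^2 ≤ f w r := by
  have hnpos : (0:ℝ) < n := by exact_mod_cast hn
  set D : ℝ := ∑ i, (r i - q i)^2 with hDdef
  have hD : 0 ≤ D := Finset.sum_nonneg fun i _ => sq_nonneg _
  set c : ℝ := ρ * n / (2 * β) with hcdef
  have hc : 0 < c := by positivity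
  -- membership of coordinates in [0,n]
  have hmem : ∀ (x : Fin n → ℝ), x ∈ stdSimplex ℝ (Fin n) →
      ∀ i, (n:ℝ) * x i ∈ Set.Icc (0:ℝ) (n:ℝ) := by
    intro x hx i
    have h0 : 0 ≤ x i := hx.1 i
    have h1 : x i ≤ 1 := by
      have := Finset.single_le_sum (f := x) (fun j _ => hx.1 j) (Finset.mem_univ i)
      rw [hx.2] at this; exact this
    constructor
    · positivity
    · nlinarith
  -- strong convexity along segments, pointwise
  have hseg : ∀ a ∈ Set.Icc (0:ℝ) (n:ℝ), ∀ b ∈ Set.Icc (0:ℝ) (n:ℝ),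
      ∀ t : ℝ, 0 ≤ t → t ≤ 1 →
      φ ((1-t) * a + t * b) ≤ (1-t) * φ a + t * φ b - ρ/2 * t * (1-t) * (a-b)^2 := by
    intro a ha b hb t ht0 ht1
    set z : ℝ := (1-t) * a + t * b with hz
    have hzmem : z ∈ Set.Icc (0:ℝ) (n:ℝ) := by
      constructor
      · nlinarith [ha.1, hb.1]
      · nlinarith [ha.2, hb.2]
    have h1 := hsc z hzmem a ha
    have h2 := hsc z hzmem b hb
    nlinarith [mul_le_mul_of_nonneg_left h1 (by linarith : (0:ℝ) ≤ 1 - t),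
      mul_le_mul_of_nonneg_left h2 ht0, sq_nonneg (a - b)]
  -- main inequality for t in (0, 1)
  have main : ∀ t : ℝ, 0 < t → t < 1 → f w q + c * (1 - t) * D ≤ f w r := by
    intro t ht0 ht1
    set qt : Fin n → ℝ := fun i => (1-t) * r i + t * q i with hqt
    have hqtmem : qt ∈ stdSimplex ℝ (Fin n) := by
      have := (convex_stdSimplex ℝ (Fin n)) hr hq (by linarith : (0:ℝ) ≤ 1 - t)
        (le_of_lt ht0) (by ring)
      convert this using 1
      ext i; simp only [hqt, Pi.add_apply, Pi.smul_apply, smul_eq_mul]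
    have hle : f w qt ≤ f w r := hmax qt hqtmem
    -- bound on the φ-sum
    have hφsum : ∑ i, φ ((n:ℝ) * qt i)
        ≤ (1-t) * ∑ i, φ ((n:ℝ) * r i) + t * ∑ i, φ ((n:ℝ) * q i)
          - ρ/2 * t * (1-t) * (n:ℝ)^2 * D := by
      rw [Finset.mul_sum, Finset.mul_sum, hDdef, Finset.mul_sum, ← Finset.sum_add_distrib,
        ← Finset.sum_sub_distrib]
      apply Finset.sum_le_sum
      intro i _
      have h := hseg ((n:ℝ) * r i) (hmem r hr i) ((n:ℝ) * q i) (hmem q hq i) t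
        (le_of_lt ht0) (le_of_lt ht1)
      have harg : (n:ℝ) * qt i = (1-t) * ((n:ℝ) * r i) + t * ((n:ℝ) * q i) := by
        simp only [hqt]; ring
      rw [harg]
      nlinarith [h]
    -- linear part
    have hlin : ∑ i, w i * qt i = (1-t) * ∑ i, w i * r i + t * ∑ i, w i * q i := by
      rw [Finset.mul_sum, Finset.mul_sum, ← Finset.sum_add_distrib]
      apply Finset.sum_congr rfl
      intro i _; simp only [hqt]; ring
    have hfqt : (1-t) * f w r + t * f w q + 1/(β*n) * (ρ/2 * t * (1-t) * (n:ℝ)^2 * D)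
        ≤ f w qt := by
      rw [hf w qt, hf w r, hf w q, hlin]
      have hpos : 0 < 1/(β*(n:ℝ)) := by positivity
      nlinarith [mul_le_mul_of_nonneg_left hφsum (le_of_lt hpos)]
    have hcoef : 1/(β*(n:ℝ)) * (ρ/2 * t * (1-t) * (n:ℝ)^2 * D) = c * t * (1-t) * D := by
      rw [hcdef]; field_simp
    rw [hcoef] at hfqt
    have hsum : t * (f w q + c * (1 - t) * D) ≤ t * f w r := by
      have hexp : t * (f w q + c * (1 - t) * D) = t * f w q + c * t * (1 - t) * D := by ring
      rw [hexp]
      nlinarith [hle, hfqt]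
    exact le_of_mul_le_mul_left hsum ht0
  -- pass to the limit t → 0
  rcases eq_or_lt_of_le hD with hD0 | hDpos
  · have : D = 0 := hD0.symm
    rw [this, mul_zero, add_zero]
    exact hmax q hq
  · have hcD : 0 < c * D := mul_pos hc hDpos
    refine le_of_forall_pos_le_add ?_
    intro ε hε
    set t : ℝ := min (ε / (c * D)) (1/2) with htdef
    have ht0 : 0 < t := lt_min (by positivity) (by norm_num)
    have ht1 : t < 1 := lt_of_le_of_lt (min_le_right _ _) (by norm_num)
    have hmain := main t ht0 ht1
    have htε : t * (c * D) ≤ ε := by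
      have : t ≤ ε / (c * D) := min_le_left _ _
      exact (le_div_iff₀ hcD).mp this
    have hexp : c * (1 - t) * D = c * D - t * (c * D) := by ring
    linarith [hmain, htε]

/-- The hardness weighted sampling distribution (maximizer of the DRO inner
problem, i.e. the gradient of the distributionally robust loss) is
`(β/(nρ))`-Lipschitz as a function of the loss vector. -/
theorem hardness_weighted_sampler_lipschitz
    (n : ℕ) (hn : 1 ≤ n) (β ρ : ℝ) (hβ : 0 < β) (hρ : 0 < ρ)
    (φ : ℝ → ℝ)
    (hC2 : ContDiffOn ℝ 2 φ (Set.Icc (0:ℝ) (n:ℝ)))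
    (hsc : ∀ z ∈ Set.Icc (0:ℝ) (n:ℝ), ∀ z' ∈ Set.Icc (0:ℝ) (n:ℝ),
      φ z + deriv φ z * (z' - z) + ρ / 2 * (z - z')^2 ≤ φ z')
    (hφ0 : ∀ z : ℝ, 0 ≤ φ z) (hφ1 : φ 1 = 0) (hφ1' : deriv φ 1 = 0)
    (f : (Fin n → ℝ) → (Fin n → ℝ) → ℝ)
    (hf : ∀ v q, f v q = ∑ i, v i * q i - (1 / (β * n)) * ∑ i, φ (n * q i))
    (v v' p p' : Fin n → ℝ)
    (hpmem : p ∈ stdSimplex ℝ (Fin n))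
    (hpmax : ∀ q ∈ stdSimplex ℝ (Fin n), f v q ≤ f v p)
    (hp'mem : p' ∈ stdSimplex ℝ (Fin n))
    (hp'max : ∀ q ∈ stdSimplex ℝ (Fin n), f v' q ≤ f v' p') :
    Real.sqrt (∑ i, (p i - p' i)^2)
      ≤ (β / (n * ρ)) * Real.sqrt (∑ i, (v i - v' i)^2) := by
  have hnpos : (0:ℝ) < n := by exact_mod_cast hn
  set D : ℝ := ∑ i, (p i - p' i)^2 with hDdef
  set S : ℝ := ∑ i, (v i - v' i)^2 with hSdef
  have hD : 0 ≤ D := Finset.sum_nonneg fun i _ => sq_nonneg _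
  have hS : 0 ≤ S := Finset.sum_nonneg fun i _ => sq_nonneg _
  set c : ℝ := ρ * n / (2 * β) with hcdef
  have h1 := key_ineq n hn β ρ hβ hρ φ hsc f hf v p p' hpmem hpmax hp'mem
  have h2 := key_ineq n hn β ρ hβ hρ φ hsc f hf v' p' p hp'mem hp'max hpmem
  have hDsym : ∑ i, (p' i - p i)^2 = D := by
    rw [hDdef]; apply Finset.sum_congr rfl; intro i _; ring
  rw [hDsym] at h2
  -- the cross term
  have hcross : f v p - f v p' + (f v' p' - f v' p) = ∑ i, (v i - v' i) * (p i - p' i) := by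
    rw [hf v p, hf v p', hf v' p, hf v' p']
    have : ∑ i, (v i - v' i) * (p i - p' i)
        = ∑ i, (v i * p i - v i * p' i - (v' i * p i - v' i * p' i)) := by
      apply Finset.sum_congr rfl; intro i _; ring
    rw [this, Finset.sum_sub_distrib, Finset.sum_sub_distrib, Finset.sum_sub_distrib]
    ring
  -- Cauchy-Schwarz
  have hCS : ∑ i, (v i - v' i) * (p i - p' i) ≤ Real.sqrt S * Real.sqrt D := by
    have h := Finset.sum_mul_sq_le_sq_mul_sq Finset.univ (fun i => v i - v' i)
      (fun i => p i - p' i)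
    have habs : ∑ i, (v i - v' i) * (p i - p' i)
        ≤ |∑ i, (v i - v' i) * (p i - p' i)| := le_abs_self _
    calc ∑ i, (v i - v' i) * (p i - p' i)
        ≤ |∑ i, (v i - v' i) * (p i - p' i)| := habs
      _ = Real.sqrt ((∑ i, (v i - v' i) * (p i - p' i))^2) := (Real.sqrt_sq_eq_abs _).symm
      _ ≤ Real.sqrt (S * D) := Real.sqrt_le_sqrt (by exact_mod_cast h)
      _ = Real.sqrt S * Real.sqrt D := Real.sqrt_mul hS D
  rw [← hDdef] at h1
  have hkey : 2 * c * D ≤ Real.sqrt S * Real.sqrt D := by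
    linarith [h1, h2, hCS, hcross, hcdef]
  -- conclude
  have hsqD : Real.sqrt D ^ 2 = D := Real.sq_sqrt hD
  have h2c : 2 * c = ρ * n / β := by rw [hcdef]; ring
  rcases eq_or_lt_of_le (Real.sqrt_nonneg D) with h0 | hpos
  · rw [← h0]
    positivity
  · have hcoef : 0 < ρ * (n:ℝ) / β := by positivity
    have : (ρ * n / β) * Real.sqrt D ≤ Real.sqrt S := by
      rw [h2c] at hkey
      nlinarith [hkey, hsqD, hpos]
    have hβn : 0 < β / ((n:ℝ) * ρ) := by positivity
    calc Real.sqrt D = (β / (n * ρ)) * ((ρ * n / β) * Real.sqrt D) := by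
          field_simp
      _ ≤ (β / (n * ρ)) * Real.sqrt S := by
          apply mul_le_mul_of_nonneg_left this (le_of_lt hβn)
end

section
/- Let n ≥ 1, β > 0, ρ > 0, and let φ : ℝ → ℝ be an admissible φ-divergence generator: φ is twice continuously differentiable on [0,n], ρ-strongly convex on [0,n], φ(z) ≥ 0 for all z, φ(1) = 0 and φ'(1) = 0. Let v, v' ∈ ℝ^n, let p ∈ Δ_n maximize f_v(q) = ⟨v, q⟩ − (1/(βn)) Σ_i φ(n q_i) over Δ_n, and let p' ∈ Δ_n maximize f_{v'} over Δ_n. Then ⟨v − v', p − p'⟩ ≥ (nρ/β) ‖p − p'‖², where ‖·‖ is the Euclidean norm on ℝ^n. -/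
open Finset

set_option maxHeartbeats 1000000 in
/-- Strong monotonicity of the hardness weighted sampling distribution:
`⟨v − v', p − p'⟩ ≥ (nρ/β) ‖p − p'‖²` for the maximizers `p, p'` of the DRO
inner problems at loss vectors `v, v'`. -/
theorem hardness_weighted_sampler_strong_monotone
    (n : ℕ) (hn : 1 ≤ n) (β ρ : ℝ) (hβ : 0 < β) (hρ : 0 < ρ)
    (φ : ℝ → ℝ)
    (hC2 : ContDiffOn ℝ 2 φ (Set.Icc (0:ℝ) (n:ℝ)))
    (hsc : ∀ z ∈ Set.Icc (0:ℝ) (n:ℝ), ∀ z' ∈ Set.Icc (0:ℝ) (n:ℝ),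
      φ z + deriv φ z * (z' - z) + ρ / 2 * (z - z')^2 ≤ φ z')
    (hφ0 : ∀ z : ℝ, 0 ≤ φ z) (hφ1 : φ 1 = 0) (hφ1' : deriv φ 1 = 0)
    (f : (Fin n → ℝ) → (Fin n → ℝ) → ℝ)
    (hf : ∀ v q, f v q = ∑ i, v i * q i - (1 / (β * n)) * ∑ i, φ (n * q i))
    (v v' p p' : Fin n → ℝ)
    (hpmem : p ∈ stdSimplex ℝ (Fin n))
    (hpmax : ∀ q ∈ stdSimplex ℝ (Fin n), f v q ≤ f v p)
    (hp'mem : p' ∈ stdSimplex ℝ (Fin n))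
    (hp'max : ∀ q ∈ stdSimplex ℝ (Fin n), f v' q ≤ f v' p') :
    (n * ρ / β) * ∑ i, (p i - p' i)^2
      ≤ ∑ i, (v i - v' i) * (p i - p' i) := by
  have hn0 : (0:ℝ) < n := by exact_mod_cast hn
  -- coordinates of simplex members lie in [0,1]
  have hcoord : ∀ (x : Fin n → ℝ), x ∈ stdSimplex ℝ (Fin n) → ∀ i, (n:ℝ) * x i ∈ Set.Icc (0:ℝ) (n:ℝ) := by
    intro x hx i
    have h1 : x i ≤ 1 := by
      have := Finset.single_le_sum (f := x) (fun j _ => hx.1 j) (Finset.mem_univ i)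
      rwa [hx.2] at this
    constructor
    · exact mul_nonneg hn0.le (hx.1 i)
    · nlinarith [hx.1 i]
  set d2 : ℝ := ∑ i, (p i - p' i)^2 with hd2
  have hd2nn : 0 ≤ d2 := Finset.sum_nonneg fun i _ => sq_nonneg _
  set S : ℝ := ∑ i, (v i - v' i) * (p i - p' i) with hS
  -- the key inequality for each t ∈ (0,1]
  have key : ∀ t : ℝ, 0 < t → t ≤ 1 → (n * ρ / β) * (1 - t) * d2 ≤ S := by
    intro t ht0 ht1
    have h1t : (0:ℝ) ≤ 1 - t := by linarith
    -- convex combinations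
    set q : Fin n → ℝ := fun i => (1 - t) * p i + t * p' i with hq
    set q' : Fin n → ℝ := fun i => (1 - t) * p' i + t * p i with hq'
    have hqmem : q ∈ stdSimplex ℝ (Fin n) := by
      constructor
      · intro i; exact add_nonneg (mul_nonneg h1t (hpmem.1 i)) (mul_nonneg ht0.le (hp'mem.1 i))
      · simp only [hq]
        rw [Finset.sum_add_distrib, ← Finset.mul_sum, ← Finset.mul_sum, hpmem.2, hp'mem.2]
        ring
    have hq'mem : q' ∈ stdSimplex ℝ (Fin n) := by
      constructor
      · intro i; exact add_nonneg (mul_nonneg h1t (hp'mem.1 i)) (mul_nonneg ht0.le (hpmem.1 i))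
      · simp only [hq']
        rw [Finset.sum_add_distrib, ← Finset.mul_sum, ← Finset.mul_sum, hpmem.2, hp'mem.2]
        ring
    -- strong convexity along segments, pointwise
    have comb : ∀ (a b : ℝ), a ∈ Set.Icc (0:ℝ) (n:ℝ) → b ∈ Set.Icc (0:ℝ) (n:ℝ) →
        φ ((1 - t) * a + t * b) + ρ / 2 * t * (1 - t) * (a - b)^2 ≤ (1 - t) * φ a + t * φ b := by
      intro a b ha hb
      have hz : (1 - t) * a + t * b ∈ Set.Icc (0:ℝ) (n:ℝ) := by
        constructor
        · nlinarith [ha.1, hb.1]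
        · nlinarith [ha.2, hb.2]
      have h1 := hsc _ hz a ha
      have h2 := hsc _ hz b hb
      nlinarith [mul_le_mul_of_nonneg_left h1 h1t, mul_le_mul_of_nonneg_left h2 ht0.le]
    -- summed regularizer inequality
    have regR : ∀ (a b : Fin n → ℝ), a ∈ stdSimplex ℝ (Fin n) → b ∈ stdSimplex ℝ (Fin n) →
        ∑ i, φ ((n:ℝ) * ((1 - t) * a i + t * b i))
          ≤ (1 - t) * ∑ i, φ ((n:ℝ) * a i) + t * ∑ i, φ ((n:ℝ) * b i)
            - ρ / 2 * t * (1 - t) * (n:ℝ)^2 * ∑ i, (a i - b i)^2 := by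
      intro a b hamem hbmem
      have hpt : ∀ i ∈ Finset.univ, φ ((n:ℝ) * ((1 - t) * a i + t * b i))
          ≤ (1 - t) * φ ((n:ℝ) * a i) + t * φ ((n:ℝ) * b i)
            - ρ / 2 * t * (1 - t) * (n:ℝ)^2 * (a i - b i)^2 := by
        intro i _
        have := comb ((n:ℝ) * a i) ((n:ℝ) * b i) (hcoord a hamem i) (hcoord b hbmem i)
        have he : (1 - t) * ((n:ℝ) * a i) + t * ((n:ℝ) * b i) = (n:ℝ) * ((1 - t) * a i + t * b i) := by ring
        rw [he] at this
        nlinarith [this]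
      calc ∑ i, φ ((n:ℝ) * ((1 - t) * a i + t * b i))
          ≤ ∑ i, ((1 - t) * φ ((n:ℝ) * a i) + t * φ ((n:ℝ) * b i)
            - ρ / 2 * t * (1 - t) * (n:ℝ)^2 * (a i - b i)^2) := Finset.sum_le_sum hpt
        _ = (1 - t) * ∑ i, φ ((n:ℝ) * a i) + t * ∑ i, φ ((n:ℝ) * b i)
            - ρ / 2 * t * (1 - t) * (n:ℝ)^2 * ∑ i, (a i - b i)^2 := by
            rw [Finset.sum_sub_distrib, Finset.sum_add_distrib, ← Finset.mul_sum, ← Finset.mul_sum, ← Finset.mul_sum]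
    have hR1 := regR p p' hpmem hp'mem
    have hR2 := regR p' p hp'mem hpmem
    -- linear parts
    have hlin : ∀ (w a b : Fin n → ℝ),
        ∑ i, w i * ((1 - t) * a i + t * b i) = (1 - t) * ∑ i, w i * a i + t * ∑ i, w i * b i := by
      intro w a b
      rw [Finset.mul_sum, Finset.mul_sum, ← Finset.sum_add_distrib]
      exact Finset.sum_congr rfl fun i _ => by ring
    -- maximality inequalities
    have hmax1 := hpmax q hqmem
    have hmax2 := hp'max q' hq'mem
    rw [hf, hf] at hmax1 hmax2
    simp only [hq] at hmax1
    simp only [hq'] at hmax2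
    rw [hlin v p p'] at hmax1
    rw [hlin v' p' p] at hmax2
    set c : ℝ := 1 / (β * n) with hc
    have hcpos : 0 < c := by positivity
    set Rp : ℝ := ∑ i, φ ((n:ℝ) * p i) with hRp
    set Rp' : ℝ := ∑ i, φ ((n:ℝ) * p' i) with hRp'
    have hsymm : ∑ i, (p' i - p i)^2 = d2 := by
      rw [hd2]; exact Finset.sum_congr rfl fun i _ => by ring
    rw [hsymm] at hR2
    -- from hmax1 and hR1:
    have hA : t * (∑ i, v i * p' i - ∑ i, v i * p i) + c * ρ / 2 * t * (1 - t) * (n:ℝ)^2 * d2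
        ≤ c * t * (Rp' - Rp) := by
      have h := hmax1
      have hRq : c * ((1 - t) * Rp + t * Rp' - ρ / 2 * t * (1 - t) * (n:ℝ)^2 * d2)
          ≥ c * ∑ i, φ ((n:ℝ) * ((1 - t) * p i + t * p' i)) := by
        exact mul_le_mul_of_nonneg_left hR1 hcpos.le
      nlinarith [h, hRq]
    have hB : t * (∑ i, v' i * p i - ∑ i, v' i * p' i) + c * ρ / 2 * t * (1 - t) * (n:ℝ)^2 * d2
        ≤ c * t * (Rp - Rp') := by
      have h := hmax2
      have hRq : c * ((1 - t) * Rp' + t * Rp - ρ / 2 * t * (1 - t) * (n:ℝ)^2 * d2)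
          ≥ c * ∑ i, φ ((n:ℝ) * ((1 - t) * p' i + t * p i)) := by
        exact mul_le_mul_of_nonneg_left hR2 hcpos.le
      nlinarith [h, hRq]
    -- combine and divide by t
    have hScalc : S = ∑ i, v i * p i - ∑ i, v i * p' i - ∑ i, v' i * p i + ∑ i, v' i * p' i := by
      rw [hS, ← Finset.sum_sub_distrib, ← Finset.sum_sub_distrib, ← Finset.sum_add_distrib]
      exact Finset.sum_congr rfl fun i _ => by ring
    have hcn : c * (n:ℝ)^2 = (n:ℝ) / β := by
      rw [hc]; field_simp
    have hsum : t * (c * ρ * (1 - t) * (n:ℝ)^2 * d2) ≤ t * S := by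
      rw [hScalc]; linarith [hA, hB]
    have := le_of_mul_le_mul_left hsum ht0
    calc (n * ρ / β) * (1 - t) * d2 = c * ρ * (1 - t) * (n:ℝ)^2 * d2 := by
          rw [hc]; field_simp
      _ ≤ S := this
  -- take t → 0 via ε-argument
  have h1 := key 1 one_pos le_rfl
  have hS0 : 0 ≤ S := by nlinarith [h1]
  set C : ℝ := n * ρ / β with hC
  have hCpos : 0 < C := by positivity
  rcases eq_or_lt_of_le hd2nn with hz | hpos
  · rw [← hz]; simpa using hS0
  · have hCd : 0 < C * d2 := mul_pos hCpos hpos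
    refine le_of_forall_pos_le_add ?_
    intro ε hε
    set t : ℝ := min 1 (ε / (C * d2)) with htdef
    have ht0 : 0 < t := lt_min one_pos (div_pos hε hCd)
    have ht1 : t ≤ 1 := min_le_left _ _
    have hkey := key t ht0 ht1
    have htε : t * (C * d2) ≤ ε := by
      have : t ≤ ε / (C * d2) := min_le_right _ _
      calc t * (C * d2) ≤ (ε / (C * d2)) * (C * d2) := by nlinarith
        _ = ε := by field_simp
    nlinarith [hkey, htε]
end

section
/- Let n ≥ 1, β > 0, ρ > 0, and let φ : ℝ → ℝ be an admissible φ-divergence generator: φ is twice continuously differentiable on [0,n], ρ-strongly convex on [0,n], φ(z) ≥ 0 for all z, φ(1) = 0 and φ'(1) = 0. Define the distributionally robust loss R(v) = sup_{q ∈ Δ_n} (⟨v, q⟩ − (1/(βn)) Σ_i φ(n q_i)) for v ∈ ℝ^n. If p ∈ Δ_n maximizes f_v(q) = ⟨v, q⟩ − (1/(βn)) Σ_i φ(n q_i) over Δ_n, then R is differentiable at v with gradient equal to p, i.e. R has gradient p at v in the sense that R(v') = R(v) + ⟨p, v' − v⟩ + o(‖v' − v‖) as v' → v. -/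
open Finset

/-- The distributionally robust loss `R` is differentiable, with gradient at `v`
equal to the maximizer `p` of the inner problem `f_v` over the simplex. -/
theorem distributionally_robust_loss_hasGradient
    (n : ℕ) (hn : 1 ≤ n) (β ρ : ℝ) (hβ : 0 < β) (hρ : 0 < ρ)
    (φ : ℝ → ℝ)
    (hC2 : ContDiffOn ℝ 2 φ (Set.Icc (0:ℝ) (n:ℝ)))
    (hsc : ∀ z ∈ Set.Icc (0:ℝ) (n:ℝ), ∀ z' ∈ Set.Icc (0:ℝ) (n:ℝ),
      φ z + deriv φ z * (z' - z) + ρ / 2 * (z - z')^2 ≤ φ z')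
    (hφ0 : ∀ z : ℝ, 0 ≤ φ z) (hφ1 : φ 1 = 0) (hφ1' : deriv φ 1 = 0)
    (Δ : Set (EuclideanSpace ℝ (Fin n)))
    (hΔ : Δ = {q : EuclideanSpace ℝ (Fin n) | (∀ i, 0 ≤ q i) ∧ ∑ i, q i = 1})
    (f : EuclideanSpace ℝ (Fin n) → EuclideanSpace ℝ (Fin n) → ℝ)
    (hf : ∀ v q, f v q = ∑ i, v i * q i - (1 / (β * n)) * ∑ i, φ (n * q i))
    (R : EuclideanSpace ℝ (Fin n) → ℝ)
    (hR : ∀ v, R v = sSup (f v '' Δ))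
    (v p : EuclideanSpace ℝ (Fin n))
    (hpmem : p ∈ Δ)
    (hpmax : ∀ q ∈ Δ, f v q ≤ f v p) :
    HasGradientAt R p v := by
  have hn0 : (0:ℝ) < n := by exact_mod_cast hn
  set μ : ℝ := ρ * n / (4 * β) with hμdef
  have hμ0 : 0 < μ := by positivity
  -- coordinate facts
  have hcoord : ∀ q ∈ Δ, ∀ i, 0 ≤ q i ∧ q i ≤ 1 := by
    intro q hq i
    rw [hΔ] at hq
    refine ⟨hq.1 i, ?_⟩
    calc q i ≤ ∑ j, q j := Finset.single_le_sum (fun j _ => hq.1 j) (Finset.mem_univ i)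
    _ = 1 := hq.2
  have hmaps : ∀ q ∈ Δ, ∀ i, (n:ℝ) * q i ∈ Set.Icc (0:ℝ) (n:ℝ) := by
    intro q hq i
    obtain ⟨h0, h1⟩ := hcoord q hq i
    constructor
    · positivity
    · nlinarith
  -- compactness
  have hΔcompact : IsCompact Δ := by
    have himg : Δ = ⇑(EuclideanSpace.equiv (Fin n) ℝ).toHomeomorph ⁻¹' (stdSimplex ℝ (Fin n)) := by
      rw [hΔ]; rfl
    rw [himg, Homeomorph.isCompact_preimage]
    exact isCompact_stdSimplex ℝ (Fin n)
  have hΔne : Δ.Nonempty := by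
    refine ⟨(WithLp.toLp 2 (fun _ => (n:ℝ)⁻¹) : EuclideanSpace ℝ (Fin n)), ?_⟩
    rw [hΔ]
    refine ⟨fun i => by positivity, ?_⟩
    simp only [Finset.sum_const, Finset.card_univ, Fintype.card_fin, nsmul_eq_mul]
    field_simp
  -- continuity of f w on Δ
  have hproj : ∀ i : Fin n, Continuous (fun q : EuclideanSpace ℝ (Fin n) => q i) :=
    fun i => (EuclideanSpace.proj i : EuclideanSpace ℝ (Fin n) →L[ℝ] ℝ).continuous
  have hcont : ∀ w, ContinuousOn (f w) Δ := by
    intro w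
    have h1 : ContinuousOn (fun q : EuclideanSpace ℝ (Fin n) => ∑ i, w i * q i) Δ :=
      (continuous_finset_sum _ fun i _ => continuous_const.mul (hproj i)).continuousOn
    have h2 : ContinuousOn (fun q : EuclideanSpace ℝ (Fin n) => ∑ i, φ ((n:ℝ) * q i)) Δ := by
      refine continuousOn_finset_sum _ (fun i _ => ?_)
      exact hC2.continuousOn.comp ((continuous_const.mul (hproj i)).continuousOn)
        (fun q hq => hmaps q hq i)
    exact (h1.sub (continuousOn_const.mul h2)).congr (fun q _ => hf w q)
  -- maximizers and value of R
  have hmaxex : ∀ w, ∃ pw ∈ Δ, ∀ q ∈ Δ, f w q ≤ f w pw := by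
    intro w
    obtain ⟨pw, hpw, hmax⟩ := hΔcompact.exists_isMaxOn hΔne (hcont w)
    exact ⟨pw, hpw, fun q hq => hmax hq⟩
  have hRval : ∀ w pw, pw ∈ Δ → (∀ q ∈ Δ, f w q ≤ f w pw) → R w = f w pw := by
    intro w pw hpw hmax
    rw [hR]
    exact IsGreatest.csSup_eq ⟨⟨pw, hpw, rfl⟩, by rintro x ⟨q, hq, rfl⟩; exact hmax q hq⟩
  -- midpoint strong convexity of φ
  have hphimid : ∀ z ∈ Set.Icc (0:ℝ) (n:ℝ), ∀ z' ∈ Set.Icc (0:ℝ) (n:ℝ),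
      2 * φ ((z + z')/2) + ρ/4 * (z - z')^2 ≤ φ z + φ z' := by
    intro z hz z' hz'
    have hm : (z + z')/2 ∈ Set.Icc (0:ℝ) (n:ℝ) := by
      obtain ⟨a, b⟩ := hz; obtain ⟨a', b'⟩ := hz'
      constructor <;> [linarith; linarith]
    have h1 := hsc _ hm z hz
    have h2 := hsc _ hm z' hz'
    nlinarith [h1, h2]
  -- coordinate identities
  have hsub : ∀ (x y : EuclideanSpace ℝ (Fin n)) (i : Fin n), (x - y) i = x i - y i :=
    fun _ _ _ => rfl
  have happly : ∀ (x y : EuclideanSpace ℝ (Fin n)) (i : Fin n),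
      ((1/2:ℝ) • (x + y)) i = (x i + y i)/2 := by
    intro x y i; simp [PiLp.smul_apply, PiLp.add_apply]; ring
  have hnormsq : ∀ x y : EuclideanSpace ℝ (Fin n), ‖x - y‖^2 = ∑ i, (x i - y i)^2 := by
    intro x y
    rw [← real_inner_self_eq_norm_sq, PiLp.inner_apply]
    exact Finset.sum_congr rfl fun i _ => by
      simp only [RCLike.inner_apply, conj_trivial, hsub]; ring
  have hinner : ∀ x y : EuclideanSpace ℝ (Fin n), (inner ℝ x y : ℝ) = ∑ i, x i * y i := by
    intro x y; rw [PiLp.inner_apply]; simp [RCLike.inner_apply, mul_comm]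
  -- translation of f in w
  have hshift : ∀ w w' q, f w' q = f w q + ∑ i, (w' i - w i) * q i := by
    intro w w' q
    rw [hf, hf]
    have : ∑ i, w' i * q i = ∑ i, (w i * q i + (w' i - w i) * q i) :=
      Finset.sum_congr rfl fun i _ => by ring
    rw [this, Finset.sum_add_distrib]
    ring
  -- midpoint strong concavity of f w on Δ
  have hmidf : ∀ w, ∀ q ∈ Δ, ∀ q' ∈ Δ,
      f w q + f w q' + μ * ‖q - q'‖^2 ≤ 2 * f w ((1/2 : ℝ) • (q + q')) := by
    intro w q hq q' hq'
    set m : EuclideanSpace ℝ (Fin n) := (1/2 : ℝ) • (q + q') with hm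
    have key : ∀ i, 2 * φ ((n:ℝ) * m i) + ρ/4 * ((n:ℝ) * q i - (n:ℝ) * q' i)^2
        ≤ φ ((n:ℝ) * q i) + φ ((n:ℝ) * q' i) := by
      intro i
      have hmi : (n:ℝ) * m i = ((n:ℝ) * q i + (n:ℝ) * q' i)/2 := by
        rw [hm, happly]; ring
      rw [hmi]
      exact hphimid _ (hmaps q hq i) _ (hmaps q' hq' i)
    have hsum := Finset.sum_le_sum (fun i (_ : i ∈ Finset.univ) => key i)
    rw [Finset.sum_add_distrib, ← Finset.mul_sum, ← Finset.mul_sum, Finset.sum_add_distrib]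
      at hsum
    have hS : ∑ i, ((n:ℝ) * q i - (n:ℝ) * q' i)^2 = (n:ℝ)^2 * ∑ i, (q i - q' i)^2 := by
      rw [Finset.mul_sum]; exact Finset.sum_congr rfl fun i _ => by ring
    rw [hS] at hsum
    have hLm : ∑ i, w i * m i = (∑ i, w i * q i + ∑ i, w i * q' i)/2 := by
      have e1 : ∑ i, w i * m i = ∑ i, (w i * q i + w i * q' i)/2 :=
        Finset.sum_congr rfl fun i _ => by rw [hm, happly]; ring
      rw [e1, ← Finset.sum_div, Finset.sum_add_distrib]

    rw [hf w q, hf w q', hf w m, hnormsq, hLm]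
    have hc0 : (0:ℝ) < 1 / (β * n) := by positivity
    have hcμ : 1 / (β * n) * (ρ/4 * (n:ℝ)^2) = μ := by
      rw [hμdef]; field_simp
    nlinarith [mul_le_mul_of_nonneg_left hsum hc0.le, hcμ,
      Finset.sum_nonneg (fun i (_ : i ∈ Finset.univ) => sq_nonneg (q i - q' i))]
  -- membership of midpoint
  have hmidmem : ∀ q ∈ Δ, ∀ q' ∈ Δ, ((1/2 : ℝ) • (q + q')) ∈ Δ := by
    intro q hq q' hq'
    have h1 := hq; have h2 := hq'
    rw [hΔ] at h1 h2 ⊢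
    constructor
    · intro i
      rw [happly]
      have := h1.1 i; have := h2.1 i
      linarith
    · have : ∑ i, ((1/2 : ℝ) • (q + q')) i = (∑ i, q i + ∑ i, q' i)/2 := by
        have e1 : ∑ i, ((1/2 : ℝ) • (q + q')) i = ∑ i, (q i + q' i)/2 :=
          Finset.sum_congr rfl fun i _ => by rw [happly]
        rw [e1, ← Finset.sum_div, Finset.sum_add_distrib]
      rw [this, h1.2, h2.2]
      norm_num
  -- quadratic growth at maximizers
  have hgrow : ∀ w, ∀ pw ∈ Δ, (∀ q ∈ Δ, f w q ≤ f w pw) →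
      ∀ q ∈ Δ, f w q + μ * ‖q - pw‖^2 ≤ f w pw := by
    intro w pw hpw hmax q hq
    have h1 := hmidf w q hq pw hpw
    have h2 := hmax _ (hmidmem q hq pw hpw)
    linarith
  -- main estimate
  rw [hasGradientAt_iff_isLittleO, Asymptotics.isLittleO_iff]
  intro c hc
  have hball : Metric.ball v (4 * μ * c) ∈ nhds v := Metric.ball_mem_nhds v (by positivity)
  filter_upwards [hball] with x' hx'
  obtain ⟨p', hp'mem, hp'max⟩ := hmaxex x'
  have hRv : R v = f v p := hRval v p hpmem hpmax
  have hRx : R x' = f x' p' := hRval x' p' hp'mem hp'max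
  have hip : (inner ℝ p (x' - v) : ℝ) = ∑ i, (x' i - v i) * p i := by
    rw [hinner]
    exact Finset.sum_congr rfl fun i _ => by rw [hsub]; ring
  have s1 := hshift v x' p'
  have s2 := hshift v x' p
  -- lower bound: 0 ≤ diff
  have low : 0 ≤ R x' - R v - inner ℝ p (x' - v) := by
    have h := hp'max p hpmem
    rw [hRx, hRv, hip]
    linarith [s2]
  -- stability and upper bound
  have g1 := hgrow v p hpmem hpmax p' hp'mem
  have g2 := hgrow x' p' hp'mem hp'max p hpmem
  have hsplit : ∑ i, (x' i - v i) * p' i - ∑ i, (x' i - v i) * p i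
      = (inner ℝ (x' - v) (p' - p) : ℝ) := by
    rw [hinner, ← Finset.sum_sub_distrib]
    exact Finset.sum_congr rfl fun i _ => by rw [hsub, hsub]; ring
  have hCS := real_inner_le_norm (x' - v) (p' - p)
  have hrev : ‖p - p'‖ = ‖p' - p‖ := norm_sub_rev _ _
  have hdist : ‖x' - v‖ < 4 * μ * c := by
    have := hx'
    rw [Metric.mem_ball, dist_eq_norm] at this
    exact this
  set N := ‖x' - v‖ with hN
  set t := ‖p' - p‖ with ht
  have hN0 : 0 ≤ N := norm_nonneg _
  have ht0 : 0 ≤ t := norm_nonneg _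
  -- diff ≤ -2μ t² + inner(x'-v)(p'-p)  ≤ -2μt² + N t
  have up : R x' - R v - inner ℝ p (x' - v) ≤ -μ*t^2 + N * t := by
    rw [hRx, hRv, hip]
    -- R x' = f v p' + ∑(x'-v)p' ; f v p' ≤ f v p - 2μ‖p'-p‖²
    have : f v p' ≤ f v p - μ*t^2 := by rw [ht]; linarith [g1]
    have h2 : ∑ i, (x' i - v i) * p' i - ∑ i, (x' i - v i) * p i ≤ N * t := by
      rw [hsplit]; exact le_trans hCS (le_of_eq rfl)
    linarith [s1]
  have final : R x' - R v - inner ℝ p (x' - v) ≤ c * N := by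
    nlinarith [sq_nonneg (2*μ*t - N), mul_nonneg hN0 (le_of_lt (sub_pos.2 hdist)), up]
  rw [Real.norm_eq_abs, abs_le]
  constructor
  · have : 0 ≤ c * N := by positivity
    linarith
  · exact final
end

section
/- Let n ≥ 1, m ≥ 1, β > 0, ρ > 0, and let φ : ℝ → ℝ be an admissible φ-divergence generator: φ is twice continuously differentiable on [0,n], ρ-strongly convex on [0,n], φ(z) ≥ 0 for all z, φ(1) = 0 and φ'(1) = 0. Define the distributionally robust loss R(v) = sup_{q ∈ Δ_n} (⟨v, q⟩ − (1/(βn)) Σ_i φ(n q_i)) for v ∈ ℝ^n. Let L : ℝ^m → ℝ^n be a map (the vector of per-example losses as a function of the parameters) whose coordinate functions L_1, …, L_n are each differentiable at a point θ ∈ ℝ^m, and let p ∈ Δ_n be the maximizer of f_{L(θ)}(q) = ⟨L(θ), q⟩ − (1/(βn)) Σ_i φ(n q_i) over Δ_n. Then the composite θ ↦ R(L(θ)) is differentiable at θ with gradient Σ_{i=1}^n p_i ∇L_i(θ), i.e. the gradient of the distributionally robust loss equals the p̄(L(θ))-weighted expectation of the per-example loss gradients. -/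
open Finset

set_option maxHeartbeats 1600000

/-- Stochastic gradient of the distributionally robust loss: if each per-example
loss `θ ↦ L(θ)ᵢ` has gradient `gL i` at `θ` and `p` maximizes the inner problem at
`L(θ)`, then `θ ↦ R(L(θ))` has gradient `Σᵢ pᵢ ∇Lᵢ(θ)` at `θ`. -/
theorem distributionally_robust_loss_chain_rule
    (n m : ℕ) (hn : 1 ≤ n) (hm : 1 ≤ m) (β ρ : ℝ) (hβ : 0 < β) (hρ : 0 < ρ)
    (φ : ℝ → ℝ)
    (hC2 : ContDiffOn ℝ 2 φ (Set.Icc (0:ℝ) (n:ℝ)))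
    (hsc : ∀ z ∈ Set.Icc (0:ℝ) (n:ℝ), ∀ z' ∈ Set.Icc (0:ℝ) (n:ℝ),
      φ z + deriv φ z * (z' - z) + ρ / 2 * (z - z')^2 ≤ φ z')
    (hφ0 : ∀ z : ℝ, 0 ≤ φ z) (hφ1 : φ 1 = 0) (hφ1' : deriv φ 1 = 0)
    (Δ : Set (EuclideanSpace ℝ (Fin n)))
    (hΔ : Δ = {q : EuclideanSpace ℝ (Fin n) | (∀ i, 0 ≤ q i) ∧ ∑ i, q i = 1})
    (f : EuclideanSpace ℝ (Fin n) → EuclideanSpace ℝ (Fin n) → ℝ)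
    (hf : ∀ v q, f v q = ∑ i, v i * q i - (1 / (β * n)) * ∑ i, φ (n * q i))
    (R : EuclideanSpace ℝ (Fin n) → ℝ)
    (hR : ∀ v, R v = sSup (f v '' Δ))
    (L : EuclideanSpace ℝ (Fin m) → EuclideanSpace ℝ (Fin n))
    (θ : EuclideanSpace ℝ (Fin m))
    (gL : Fin n → EuclideanSpace ℝ (Fin m))
    (hgL : ∀ i, HasGradientAt (fun θ' => L θ' i) (gL i) θ)
    (p : EuclideanSpace ℝ (Fin n))
    (hpmem : p ∈ Δ)
    (hpmax : ∀ q ∈ Δ, f (L θ) q ≤ f (L θ) p) :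
    HasGradientAt (fun θ' => R (L θ')) (∑ i, p i • gL i) θ := by
  classical
  have hn0 : (0:ℝ) < n := by exact_mod_cast Nat.lt_of_lt_of_le Nat.zero_lt_one hn
  set v0 : EuclideanSpace ℝ (Fin n) := L θ with hv0
  set κ : ℝ := ρ * n / (4 * β) with hκdef
  have hκ0 : 0 < κ := by positivity
  set C : ℝ := 1 / (4 * κ) with hCdef
  have hC0 : 0 < C := by positivity
  have hCκ : 4 * κ * C = 1 := by rw [hCdef]; field_simp
  -- coordinates of Δ members
  have hcoord : ∀ q ∈ Δ, ∀ i, 0 ≤ q i ∧ q i ≤ 1 := by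
    intro q hq i
    rw [hΔ] at hq
    refine ⟨hq.1 i, ?_⟩
    calc q i ≤ ∑ j, q j := Finset.single_le_sum (fun j _ => hq.1 j) (Finset.mem_univ i)
    _ = 1 := hq.2
  have hzmem : ∀ q ∈ Δ, ∀ i, (n:ℝ) * q i ∈ Set.Icc (0:ℝ) (n:ℝ) := by
    intro q hq i
    obtain ⟨h1, h2⟩ := hcoord q hq i
    constructor
    · positivity
    · nlinarith
  -- bounded above
  have hbdd : ∀ v, BddAbove (f v '' Δ) := by
    intro v
    refine ⟨∑ i, |v i|, ?_⟩
    rintro x ⟨q, hq, rfl⟩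
    rw [hf]
    have h1 : ∑ i, v i * q i ≤ ∑ i, |v i| := by
      apply Finset.sum_le_sum
      intro i _
      obtain ⟨ha, hb⟩ := hcoord q hq i
      calc v i * q i ≤ |v i| * q i :=
            mul_le_mul_of_nonneg_right (le_abs_self _) ha
        _ ≤ |v i| * 1 := mul_le_mul_of_nonneg_left hb (abs_nonneg _)
        _ = |v i| := mul_one _
    have h2 : 0 ≤ (1 / (β * n)) * ∑ i, φ (n * q i) := by
      apply mul_nonneg (by positivity)
      exact Finset.sum_nonneg fun i _ => hφ0 _
    linarith
  have hne : ∀ v : EuclideanSpace ℝ (Fin n), (f v '' Δ).Nonempty :=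
    fun v => ⟨f v p, ⟨p, hpmem, rfl⟩⟩
  have hRv0 : R v0 = f v0 p := by
    rw [hR]
    apply le_antisymm
    · apply csSup_le (hne v0)
      rintro x ⟨q, hq, rfl⟩
      exact hpmax q hq
    · exact le_csSup (hbdd v0) ⟨p, hpmem, rfl⟩
  -- strong concavity of f v0 around the maximizer p
  have hstrong : ∀ q ∈ Δ, f v0 q + κ * (∑ i, (q i - p i)^2) ≤ f v0 p := by
    intro q hq
    set mq : EuclideanSpace ℝ (Fin n) := (1/2 : ℝ) • (p + q) with hmq
    have hmqi : ∀ i, mq i = (p i + q i)/2 := by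
      intro i
      simp only [hmq, PiLp.smul_apply, PiLp.add_apply, smul_eq_mul]
      ring
    have hmqΔ : mq ∈ Δ := by
      rw [hΔ] at hpmem hq ⊢
      refine ⟨fun i => ?_, ?_⟩
      · rw [hmqi]
        have := hpmem.1 i; have := hq.1 i
        linarith
      · have hs : ∑ i, mq i = ((∑ i, p i) + ∑ i, q i)/2 := by
          rw [← Finset.sum_add_distrib, Finset.sum_div]
          exact Finset.sum_congr rfl fun i _ => hmqi i
        rw [hs, hpmem.2, hq.2]; norm_num
    have hmid : ∀ i, φ ((n:ℝ) * mq i) + (ρ * (n:ℝ)^2/8) * (q i - p i)^2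
        ≤ (φ ((n:ℝ) * p i) + φ ((n:ℝ) * q i))/2 := by
      intro i
      have hzp := hzmem p hpmem i
      have hzq := hzmem q hq i
      have hzm := hzmem mq hmqΔ i
      have h1 := hsc _ hzm _ hzp
      have h2 := hsc _ hzm _ hzq
      have hm : (n:ℝ) * mq i = ((n:ℝ) * p i + (n:ℝ) * q i)/2 := by
        rw [hmqi]; ring
      rw [hm] at h1 h2 ⊢
      nlinarith [h1, h2]
    have hsum2 : ∑ i, φ ((n:ℝ) * mq i) + (ρ * (n:ℝ)^2/8) * ∑ i, (q i - p i)^2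
        ≤ (∑ i, φ ((n:ℝ) * p i) + ∑ i, φ ((n:ℝ) * q i))/2 := by
      calc ∑ i, φ ((n:ℝ) * mq i) + (ρ * (n:ℝ)^2/8) * ∑ i, (q i - p i)^2
          = ∑ i, (φ ((n:ℝ) * mq i) + (ρ * (n:ℝ)^2/8) * (q i - p i)^2) := by
            rw [Finset.sum_add_distrib, Finset.mul_sum]
        _ ≤ ∑ i, ((φ ((n:ℝ) * p i) + φ ((n:ℝ) * q i))/2) :=
            Finset.sum_le_sum fun i _ => hmid i
        _ = (∑ i, φ ((n:ℝ) * p i) + ∑ i, φ ((n:ℝ) * q i))/2 := by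
            rw [← Finset.sum_add_distrib, Finset.sum_div]
    have hsum1 : ∑ i, v0 i * mq i = ((∑ i, v0 i * p i) + ∑ i, v0 i * q i)/2 := by
      rw [← Finset.sum_add_distrib, Finset.sum_div]
      apply Finset.sum_congr rfl
      intro i _
      rw [hmqi]; ring
    have hle := hpmax mq hmqΔ
    rw [hf, hf] at hle
    rw [hf, hf]
    have hpos : (0:ℝ) < 1/(β*n) := by positivity
    have hcc : (1/(β*(n:ℝ))) * (ρ * (n:ℝ)^2/8) = κ/2 := by
      rw [hκdef]; field_simp; ring
    have h5 : (1/(β*(n:ℝ))) * (ρ * (n:ℝ)^2/8) * (∑ i, (q i - p i)^2)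
        = (κ/2) * ∑ i, (q i - p i)^2 := by rw [hcc]
    have h6 : (1/(β*(n:ℝ))) * ∑ i, φ ((n:ℝ) * mq i) + (κ/2) * ∑ i, (q i - p i)^2
        ≤ (1/(β*(n:ℝ))) * ((∑ i, φ ((n:ℝ) * p i) + ∑ i, φ ((n:ℝ) * q i))/2) := by
      nlinarith [mul_le_mul_of_nonneg_left hsum2 hpos.le, h5]
    linarith [hle, hsum1, h6]
  -- key quadratic bound for R near v0
  have hip : ∀ x y : EuclideanSpace ℝ (Fin n), (inner ℝ x y : ℝ) = ∑ i, x i * y i := by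
    intro x y
    simp [PiLp.inner_apply, RCLike.inner_apply, conj_trivial, mul_comm]
  have hnormsq : ∀ x : EuclideanSpace ℝ (Fin n), ‖x‖^2 = ∑ i, (x i)^2 := by
    intro x
    rw [← real_inner_self_eq_norm_sq, hip]
    apply Finset.sum_congr rfl
    intro i _
    ring
  have hkey : ∀ v : EuclideanSpace ℝ (Fin n),
      |R v - R v0 - (inner ℝ p (v - v0) : ℝ)| ≤ C * ‖v - v0‖^2 := by
    intro v
    have hsubi : ∀ (a b : EuclideanSpace ℝ (Fin n)) (i : Fin n), (a - b) i = a i - b i :=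
      fun a b i => rfl
    have hIP : (inner ℝ p (v - v0) : ℝ) = ∑ i, (v i - v0 i) * p i := by
      rw [hip]
      exact Finset.sum_congr rfl fun i _ => by rw [hsubi]; ring
    have hdiff : ∀ q : EuclideanSpace ℝ (Fin n),
        f v q = f v0 q + ∑ i, (v i - v0 i) * q i := by
      intro q
      rw [hf, hf]
      have : ∑ i, v i * q i = ∑ i, v0 i * q i + ∑ i, (v i - v0 i) * q i := by
        rw [← Finset.sum_add_distrib]
        exact Finset.sum_congr rfl fun i _ => by ring
      rw [this]; ring
    have hlow : R v0 + (inner ℝ p (v - v0) : ℝ) ≤ R v := by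
      rw [hR v, hRv0, hIP]
      have : f v0 p + ∑ i, (v i - v0 i) * p i = f v p := (hdiff p).symm
      rw [this]
      exact le_csSup (hbdd v) ⟨p, hpmem, rfl⟩
    have hupp : R v ≤ R v0 + (inner ℝ p (v - v0) : ℝ) + C * ‖v - v0‖^2 := by
      rw [hR v]
      apply csSup_le (hne v)
      rintro x ⟨q, hq, rfl⟩
      rw [hdiff q]
      have hcs : ∑ i, (v i - v0 i) * (q i - p i) ≤ ‖v - v0‖ * ‖q - p‖ := by
        have h := real_inner_le_norm (v - v0) (q - p)
        rw [hip] at h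
        have he : ∑ i, (v - v0) i * (q - p) i = ∑ i, (v i - v0 i) * (q i - p i) :=
          Finset.sum_congr rfl fun i _ => by rw [hsubi, hsubi]
        rwa [he] at h
      have hsplit : ∑ i, (v i - v0 i) * q i
          = (∑ i, (v i - v0 i) * p i) + ∑ i, (v i - v0 i) * (q i - p i) := by
        rw [← Finset.sum_add_distrib]
        exact Finset.sum_congr rfl fun i _ => by ring
      have hqp : ‖q - p‖^2 = ∑ i, (q i - p i)^2 := by
        rw [hnormsq]
        exact Finset.sum_congr rfl fun i _ => by rw [hsubi]
      have hst := hstrong q hq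
      have hamgm : ‖v - v0‖ * ‖q - p‖ ≤ κ * ‖q - p‖^2 + C * ‖v - v0‖^2 := by
        have hid : κ * ‖q - p‖^2 + C * ‖v - v0‖^2 - ‖v - v0‖ * ‖q - p‖
            = C * (2*κ*‖q - p‖ - ‖v - v0‖)^2 := by
          rw [hCdef]; field_simp; ring
        nlinarith [sq_nonneg (2*κ*‖q - p‖ - ‖v - v0‖), hC0]
      rw [hIP, hRv0]
      rw [hqp] at hamgm
      linarith
    rw [abs_le]
    constructor
    · nlinarith [hlow, mul_nonneg hC0.le (sq_nonneg ‖v - v0‖)]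
    · linarith
  -- R has gradient p at v0
  have hfder : HasFDerivAt R (InnerProductSpace.toDual ℝ _ p) v0 := by
    rw [hasFDerivAt_iff_isLittleO, Asymptotics.isLittleO_iff]
    intro c hc
    rw [Metric.eventually_nhds_iff]
    refine ⟨4*κ*c, by positivity, fun v hv => ?_⟩
    rw [dist_eq_norm] at hv
    have h1 := hkey v
    have h2 : (InnerProductSpace.toDual ℝ _ p) (v - v0) = (inner ℝ p (v - v0) : ℝ) :=
      InnerProductSpace.toDual_apply_apply
    rw [Real.norm_eq_abs, h2]
    have h3 : 0 ≤ ‖v - v0‖ := norm_nonneg _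
    calc |R v - R v0 - (inner ℝ p (v - v0) : ℝ)| ≤ C * ‖v - v0‖^2 := h1
      _ = C * ‖v - v0‖ * ‖v - v0‖ := by ring
      _ ≤ C * (4*κ*c) * ‖v - v0‖ := by
          apply mul_le_mul_of_nonneg_right _ h3
          exact mul_le_mul_of_nonneg_left hv.le hC0.le
      _ = (4*κ*C) * c * ‖v - v0‖ := by ring
      _ = c * ‖v - v0‖ := by rw [hCκ]; ring
  -- derivative of L
  have hfL : ∀ i, HasFDerivAt (fun θ' => L θ' i)
      (InnerProductSpace.toDual ℝ _ (gL i)) θ := fun i => (hgL i).hasFDerivAt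
  have hpi : HasFDerivAt (fun θ' (i : Fin n) => L θ' i)
      (ContinuousLinearMap.pi fun i => InnerProductSpace.toDual ℝ _ (gL i)) θ :=
    hasFDerivAt_pi.mpr hfL
  set e := PiLp.continuousLinearEquiv 2 ℝ (fun _ : Fin n => ℝ) with he
  have hL : HasFDerivAt L
      ((e.symm : (Fin n → ℝ) →L[ℝ] EuclideanSpace ℝ (Fin n)).comp
        (ContinuousLinearMap.pi fun i => InnerProductSpace.toDual ℝ _ (gL i))) θ :=
    (e.symm.hasFDerivAt).comp θ hpi
  have hcomp := hfder.comp θ hL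
  rw [hasGradientAt_iff_hasFDerivAt]
  refine HasFDerivAt.congr_fderiv hcomp (Eq.symm ?_)
  apply ContinuousLinearMap.ext
  intro w
  simp only [ContinuousLinearMap.comp_apply, InnerProductSpace.toDual_apply_apply,
    ContinuousLinearMap.pi_apply]
  rw [sum_inner, hip]
  apply Finset.sum_congr rfl
  intro i _
  rw [real_inner_smul_left]
  rfl
end

section
/- Let n ≥ 1, β > 0, ρ > 0, and let φ : ℝ → ℝ be an admissible φ-divergence generator: φ is twice continuously differentiable on [0,n], ρ-strongly convex on [0,n], φ(z) ≥ 0 for all z, φ(1) = 0 and φ'(1) = 0. Fix i ∈ {1,…,n}, v ∈ ℝ^n, ε > 0, and set v' = v + ε e_i, where e_i is the i-th standard basis vector. If p ∈ Δ_n maximizes f_v(q) = ⟨v, q⟩ − (1/(βn)) Σ_k φ(n q_k) over Δ_n and p' ∈ Δ_n maximizes f_{v'} over Δ_n, then for every j ≠ i one has p'_j ≤ p_j. (The hardness weighted sampling probability of an example is a nonincreasing function of any other example's loss.) -/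
open Finset

/-- Four point inequality from first-order strong convexity. -/
lemma four_point' (N ρ : ℝ) (φ : ℝ → ℝ)
    (hsc : ∀ z ∈ Set.Icc (0:ℝ) N, ∀ z' ∈ Set.Icc (0:ℝ) N,
      φ z + deriv φ z * (z' - z) + ρ / 2 * (z - z')^2 ≤ φ z')
    (a b s : ℝ) (ha0 : 0 ≤ a) (hbN : b ≤ N) (hs : 0 ≤ s) (h2s : 2*s ≤ b - a) :
    φ (a+s) + φ (b-s) + ρ * s * (b - a - s) ≤ φ a + φ b := by
  have hab : a ≤ b := by linarith
  have hz1 : a + s ∈ Set.Icc (0:ℝ) N := ⟨by linarith, by linarith⟩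
  have hz2 : b - s ∈ Set.Icc (0:ℝ) N := ⟨by linarith, by linarith⟩
  have haI : a ∈ Set.Icc (0:ℝ) N := ⟨ha0, by linarith⟩
  have hbI : b ∈ Set.Icc (0:ℝ) N := ⟨by linarith, hbN⟩
  have h1 := hsc (a+s) hz1 a haI
  have h2 := hsc (b-s) hz2 b hbI
  have h3 := hsc (a+s) hz1 (b-s) hz2
  have h4 := hsc (b-s) hz2 (a+s) hz1
  rcases eq_or_lt_of_le h2s with hd | hd
  · have hb2 : b = a + 2*s := by linarith
    subst hb2
    have e : a + 2*s - s = a + s := by ring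
    rw [e] at h2
    nlinarith [h1, h2]
  · have hdd : (0:ℝ) < b - s - (a + s) := by linarith
    have h5 : ρ * (b - s - (a+s)) ≤ deriv φ (b-s) - deriv φ (a+s) := by
      nlinarith [h3, h4, hdd]
    have h6 : s * (ρ * (b - s - (a+s))) ≤ s * (deriv φ (b-s) - deriv φ (a+s)) :=
      mul_le_mul_of_nonneg_left h5 hs
    nlinarith [h1, h2, h6]

lemma sum_two_diff {n : ℕ} (a b : Fin n → ℝ) (j m : Fin n) (hjm : j ≠ m)
    (h : ∀ k, k ≠ j → k ≠ m → a k = b k) :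
    ∑ k, a k = ∑ k, b k + ((a j - b j) + (a m - b m)) := by
  have key : ∑ k ∈ ({j, m} : Finset (Fin n)), (a k - b k) = ∑ k, (a k - b k) := by
    refine Finset.sum_subset (Finset.subset_univ _) ?_
    intro x _ hx
    simp only [Finset.mem_insert, Finset.mem_singleton, not_or] at hx
    rw [h x hx.1 hx.2]; ring
  rw [Finset.sum_pair hjm] at key
  have h2 := Finset.sum_sub_distrib (f := a) (g := b) (s := Finset.univ)
  rw [h2] at key
  linarith

set_option maxHeartbeats 1000000 in
/-- Exploration property: the hardness weighted sampling probability of every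
other example is a nonincreasing function of the `i`-th loss value. -/
theorem hardness_weighted_sampler_antitone_other_loss
    (n : ℕ) (hn : 1 ≤ n) (β ρ : ℝ) (hβ : 0 < β) (hρ : 0 < ρ)
    (φ : ℝ → ℝ)
    (hC2 : ContDiffOn ℝ 2 φ (Set.Icc (0:ℝ) (n:ℝ)))
    (hsc : ∀ z ∈ Set.Icc (0:ℝ) (n:ℝ), ∀ z' ∈ Set.Icc (0:ℝ) (n:ℝ),
      φ z + deriv φ z * (z' - z) + ρ / 2 * (z - z')^2 ≤ φ z')
    (hφ0 : ∀ z : ℝ, 0 ≤ φ z) (hφ1 : φ 1 = 0) (hφ1' : deriv φ 1 = 0)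
    (f : (Fin n → ℝ) → (Fin n → ℝ) → ℝ)
    (hf : ∀ w q, f w q = ∑ k, w k * q k - (1 / (β * n)) * ∑ k, φ (n * q k))
    (i : Fin n) (v : Fin n → ℝ) (ε : ℝ) (hε : 0 < ε)
    (v' : Fin n → ℝ) (hv' : v' = v + ε • (Pi.single i 1 : Fin n → ℝ))
    (p p' : Fin n → ℝ)
    (hpmem : p ∈ stdSimplex ℝ (Fin n))
    (hpmax : ∀ q ∈ stdSimplex ℝ (Fin n), f v q ≤ f v p)
    (hp'mem : p' ∈ stdSimplex ℝ (Fin n))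
    (hp'max : ∀ q ∈ stdSimplex ℝ (Fin n), f v' q ≤ f v' p') :
    ∀ j : Fin n, j ≠ i → p' j ≤ p j := by
  have hn0 : (0:ℝ) < n := by exact_mod_cast Nat.lt_of_lt_of_le Nat.zero_lt_one hn
  have hc : (0:ℝ) < 1 / (β * n) := one_div_pos.mpr (mul_pos hβ hn0)
  -- f v' q = f v q + ε * q i
  have hkey : ∀ q : Fin n → ℝ, f v' q = f v q + ε * q i := by
    intro q
    rw [hf, hf, hv']
    have hsum : ∑ k, (v + ε • (Pi.single i 1 : Fin n → ℝ)) k * q k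
        = ∑ k, v k * q k + ε * q i := by
      have : ∀ k, (v + ε • (Pi.single i 1 : Fin n → ℝ)) k * q k
          = v k * q k + (if k = i then ε * q k else 0) := by
        intro k
        by_cases hk : k = i <;> simp [hk, Pi.single_apply] <;> ring
      rw [Finset.sum_congr rfl (fun k _ => this k), Finset.sum_add_distrib,
        Finset.sum_ite_eq' Finset.univ i (fun k => ε * q k)]
      simp
    rw [hsum]; ring
  -- monotonicity of the i-th coordinate
  have hpi : p i ≤ p' i := by
    have h1 := hpmax p' hp'mem
    have h2 := hp'max p hpmem
    rw [hkey p, hkey p'] at h2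
    nlinarith [h1, h2, hε]
  intro j hji
  by_contra hcon
  push_neg at hcon
  -- find a coordinate m where p' m < p m
  obtain ⟨m, hm⟩ : ∃ m, p' m < p m := by
    by_contra hno
    push_neg at hno
    have hlt : ∑ k, p k < ∑ k, p' k :=
      Finset.sum_lt_sum (fun k _ => hno k) ⟨j, Finset.mem_univ j, hcon⟩
    rw [hpmem.2, hp'mem.2] at hlt
    exact lt_irrefl _ hlt
  have hmi : m ≠ i := by intro h; subst h; linarith
  have hmj : m ≠ j := by intro h; subst h; linarith
  have hjm : j ≠ m := hmj.symm
  -- the transfer amount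
  set t : ℝ := min (p' j - p j) (p m - p' m) / 2 with htdef
  have ht0 : 0 < t := by
    have := lt_min (show (0:ℝ) < p' j - p j by linarith) (show (0:ℝ) < p m - p' m by linarith)
    simp only [htdef]; linarith
  have htj : 2 * t ≤ p' j - p j := by
    have := min_le_left (p' j - p j) (p m - p' m); simp only [htdef]; linarith
  have htm : 2 * t ≤ p m - p' m := by
    have := min_le_right (p' j - p j) (p m - p' m); simp only [htdef]; linarith
  -- coordinate upper bounds
  have hpub : ∀ k, p k ≤ 1 := by
    intro k
    have h := Finset.single_le_sum (f := p) (fun k _ => hpmem.1 k) (Finset.mem_univ k)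
    rw [hpmem.2] at h; exact h
  have hp'ub : ∀ k, p' k ≤ 1 := by
    intro k
    have h := Finset.single_le_sum (f := p') (fun k _ => hp'mem.1 k) (Finset.mem_univ k)
    rw [hp'mem.2] at h; exact h
  -- perturbed points
  set q : Fin n → ℝ := fun k => p k + ((if k = j then t else 0) - (if k = m then t else 0))
    with hqdef
  set q' : Fin n → ℝ := fun k => p' k + ((if k = m then t else 0) - (if k = j then t else 0))
    with hq'def
  have hqj : q j = p j + t := by simp [hqdef, hjm]
  have hqm : q m = p m - t := by simp [hqdef, hmj, sub_eq_add_neg]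
  have hq'j : q' j = p' j - t := by simp [hq'def, hjm, sub_eq_add_neg]
  have hq'm : q' m = p' m + t := by simp [hq'def, hmj]
  have hq_eq : ∀ k, k ≠ j → k ≠ m → q k = p k := by
    intro k h1 h2; simp [hqdef, h1, h2]
  have hq'_eq : ∀ k, k ≠ j → k ≠ m → q' k = p' k := by
    intro k h1 h2; simp [hq'def, h1, h2]
  have hq : q ∈ stdSimplex ℝ (Fin n) := by
    constructor
    · intro k
      by_cases h1 : k = j
      · subst h1; rw [hqj]; have := hpmem.1 k; linarith
      · by_cases h2 : k = m
        · subst h2; rw [hqm]; have := hp'mem.1 k; linarith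
        · rw [hq_eq k h1 h2]; exact hpmem.1 k
    · have : ∑ k, q k = ∑ k, p k
          + (∑ k, (if k = j then t else 0) - ∑ k, (if k = m then t else 0)) := by
        simp only [hqdef]
        rw [Finset.sum_add_distrib, Finset.sum_sub_distrib]
      rw [this, Finset.sum_ite_eq' Finset.univ j (fun _ => t),
        Finset.sum_ite_eq' Finset.univ m (fun _ => t), hpmem.2]
      simp
  have hq' : q' ∈ stdSimplex ℝ (Fin n) := by
    constructor
    · intro k
      by_cases h1 : k = j
      · subst h1; rw [hq'j]; have := hpmem.1 k; linarith
      · by_cases h2 : k = m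
        · subst h2; rw [hq'm]; have := hp'mem.1 k; linarith
        · rw [hq'_eq k h1 h2]; exact hp'mem.1 k
    · have : ∑ k, q' k = ∑ k, p' k
          + (∑ k, (if k = m then t else 0) - ∑ k, (if k = j then t else 0)) := by
        simp only [hq'def]
        rw [Finset.sum_add_distrib, Finset.sum_sub_distrib]
      rw [this, Finset.sum_ite_eq' Finset.univ j (fun _ => t),
        Finset.sum_ite_eq' Finset.univ m (fun _ => t), hp'mem.2]
      simp
  -- v' agrees with v off i
  have hvj' : v' j = v j := by simp [hv', Pi.single_apply, hji]
  have hvm' : v' m = v m := by simp [hv', Pi.single_apply, hmi]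
  -- first optimality inequality
  have hA := hpmax q hq
  rw [hf, hf] at hA
  rw [sum_two_diff (fun k => v k * q k) (fun k => v k * p k) j m hjm
      (fun k h1 h2 => by simp only [hq_eq k h1 h2]),
    sum_two_diff (fun k => φ ((n:ℝ) * q k)) (fun k => φ ((n:ℝ) * p k)) j m hjm
      (fun k h1 h2 => by simp only [hq_eq k h1 h2])] at hA
  simp only [hqj, hqm] at hA
  -- second optimality inequality
  have hB := hp'max q' hq'
  rw [hf, hf] at hB
  rw [sum_two_diff (fun k => v' k * q' k) (fun k => v' k * p' k) j m hjm
      (fun k h1 h2 => by simp only [hq'_eq k h1 h2]),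
    sum_two_diff (fun k => φ ((n:ℝ) * q' k)) (fun k => φ ((n:ℝ) * p' k)) j m hjm
      (fun k h1 h2 => by simp only [hq'_eq k h1 h2])] at hB
  simp only [hq'j, hq'm, hvj', hvm'] at hB
  -- four point inequalities
  have harg1 : (n:ℝ) * p j + n * t = n * (p j + t) := by ring
  have harg2 : (n:ℝ) * p' j - n * t = n * (p' j - t) := by ring
  have harg3 : (n:ℝ) * p' m + n * t = n * (p' m + t) := by ring
  have harg4 : (n:ℝ) * p m - n * t = n * (p m - t) := by ring
  have FP1 := four_point' (n:ℝ) ρ φ hsc ((n:ℝ) * p j) ((n:ℝ) * p' j) ((n:ℝ) * t)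
    (by have := hpmem.1 j; positivity)
    (by have := hp'ub j; nlinarith)
    (by positivity)
    (by nlinarith)
  rw [harg1, harg2] at FP1
  have FP2 := four_point' (n:ℝ) ρ φ hsc ((n:ℝ) * p' m) ((n:ℝ) * p m) ((n:ℝ) * t)
    (by have := hp'mem.1 m; positivity)
    (by have := hpub m; nlinarith)
    (by positivity)
    (by nlinarith)
  rw [harg3, harg4] at FP2
  -- combine
  have hgap1 : 0 < ρ * ((n:ℝ) * t) * ((n:ℝ) * p' j - (n:ℝ) * p j - (n:ℝ) * t) := by
    have h1 : (0:ℝ) < (n:ℝ) * t := by positivity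
    have h2 : (0:ℝ) < (n:ℝ) * (p' j - p j - t) := mul_pos hn0 (by linarith)
    have h3 : (0:ℝ) < (n:ℝ) * p' j - (n:ℝ) * p j - (n:ℝ) * t := by nlinarith
    exact mul_pos (mul_pos hρ h1) h3
  have hgap2 : 0 < ρ * ((n:ℝ) * t) * ((n:ℝ) * p m - (n:ℝ) * p' m - (n:ℝ) * t) := by
    have h1 : (0:ℝ) < (n:ℝ) * t := by positivity
    have h2 : (0:ℝ) < (n:ℝ) * (p m - p' m - t) := mul_pos hn0 (by linarith)
    have h3 : (0:ℝ) < (n:ℝ) * p m - (n:ℝ) * p' m - (n:ℝ) * t := by nlinarith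
    exact mul_pos (mul_pos hρ h1) h3
  -- from hA, hB : c * (A + B) ≥ 0 where A + B < 0
  set c : ℝ := 1 / (β * (n:ℝ)) with hcdef
  set A : ℝ := (φ ((n:ℝ) * (p j + t)) - φ ((n:ℝ) * p j))
    + (φ ((n:ℝ) * (p m - t)) - φ ((n:ℝ) * p m)) with hAdef
  set B : ℝ := (φ ((n:ℝ) * (p' j - t)) - φ ((n:ℝ) * p' j))
    + (φ ((n:ℝ) * (p' m + t)) - φ ((n:ℝ) * p' m)) with hBdef
  have hAB : 0 ≤ c * (A + B) := by
    have e1 : v j * (p j + t) - v j * p j + (v m * (p m - t) - v m * p m) - c * A ≤ 0 := by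
      linarith [hA]
    have e2 : v j * (p' j - t) - v j * p' j + (v m * (p' m + t) - v m * p' m) - c * B ≤ 0 := by
      linarith [hB]
    linarith [e1, e2]
  have hABlt : A + B < 0 := by
    rw [hAdef, hBdef]
    linarith [FP1, FP2, hgap1, hgap2]
  linarith [hAB, mul_pos hc (neg_pos.mpr hABlt)]
end

section
/- Let n ≥ 1, d ≥ 1 and constants K ≥ 0, C_L ≥ 0, C_∇ ≥ 0. Let p̄ : ℝ^n → ℝ^n be K-Lipschitz with p̄(v) ∈ Δ_n for every v ∈ ℝ^n. For i = 1, …, n, let ℓ_i : ℝ^d → ℝ be differentiable, C_L-Lipschitz, and with C_∇-Lipschitz gradient. For z = (z_1, …, z_n) ∈ (ℝ^d)^n define L(z) = (ℓ_1(z_1), …, ℓ_n(z_n)) ∈ ℝ^n and the vector field F(z) = (p̄_1(L(z)) ∇ℓ_1(z_1), …, p̄_n(L(z)) ∇ℓ_n(z_n)) ∈ (ℝ^d)^n. Then for all z, z' ∈ (ℝ^d)^n, Σ_{i=1}^n ⟨F_i(z) − F_i(z'), z_i − z'_i⟩ ≤ (K C_L² + 2 C_∇) Σ_{i=1}^n ‖z_i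 − z'_i‖². (The composite R ∘ L is one-sided gradient Lipschitz with constant β C(𝓛)²/(nρ) + 2 C(∇𝓛).) -/
open Finset
open scoped RealInnerProductSpace

/-- Gradient of a Lipschitz function is norm-bounded by the Lipschitz constant. -/
lemma grad_norm_le_of_lip {d : ℕ} {f : EuclideanSpace ℝ (Fin d) → ℝ}
    {gf : EuclideanSpace ℝ (Fin d)} {x : EuclideanSpace ℝ (Fin d)} {C : ℝ} (hC : 0 ≤ C)
    (hgrad : HasGradientAt f gf x) (hlip : ∀ u v, |f u - f v| ≤ C * ‖u - v‖) :
    ‖gf‖ ≤ C := by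
  have h := hgrad.hasFDerivAt.le_of_lip' hC (Filter.Eventually.of_forall fun y => by
    simpa [Real.norm_eq_abs] using hlip y x)
  simpa using h

/-- One-sided gradient Lipschitz property of the distributionally robust loss
composed with the per-example losses: the vector field
`F(z)ᵢ = p̄ᵢ(L(z)) ∇ℓᵢ(zᵢ)` satisfies
`Σᵢ ⟨Fᵢ(z) − Fᵢ(z'), zᵢ − z'ᵢ⟩ ≤ (K C_L² + 2 C_∇) Σᵢ ‖zᵢ − z'ᵢ‖²`. -/
theorem robust_loss_one_sided_gradient_lipschitz
    (n d : ℕ) (hn : 1 ≤ n) (hd : 1 ≤ d)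
    (K CL Cgrad : ℝ) (hK : 0 ≤ K) (hCL : 0 ≤ CL) (hCgrad : 0 ≤ Cgrad)
    (pbar : EuclideanSpace ℝ (Fin n) → EuclideanSpace ℝ (Fin n))
    (hpbarSimplex : ∀ v, (∀ i, 0 ≤ pbar v i) ∧ ∑ i, pbar v i = 1)
    (hpbarLip : ∀ v v', ‖pbar v - pbar v'‖ ≤ K * ‖v - v'‖)
    (ℓ : Fin n → EuclideanSpace ℝ (Fin d) → ℝ)
    (g : Fin n → EuclideanSpace ℝ (Fin d) → EuclideanSpace ℝ (Fin d))
    (hgrad : ∀ i x, HasGradientAt (ℓ i) (g i x) x)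
    (hℓLip : ∀ i x y, |ℓ i x - ℓ i y| ≤ CL * ‖x - y‖)
    (hgLip : ∀ i x y, ‖g i x - g i y‖ ≤ Cgrad * ‖x - y‖)
    (L : (Fin n → EuclideanSpace ℝ (Fin d)) → EuclideanSpace ℝ (Fin n))
    (hL : ∀ z i, L z i = ℓ i (z i))
    (F : (Fin n → EuclideanSpace ℝ (Fin d)) → Fin n → EuclideanSpace ℝ (Fin d))
    (hF : ∀ z i, F z i = pbar (L z) i • g i (z i)) :
    ∀ z z' : Fin n → EuclideanSpace ℝ (Fin d),
      ∑ i, ⟪F z i - F z' i, z i - z' i⟫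
        ≤ (K * CL ^ 2 + 2 * Cgrad) * ∑ i, ‖z i - z' i‖ ^ 2 := by
  intro z z'
  set p := pbar (L z) with hp
  set p' := pbar (L z') with hp'
  set Δ : Fin n → EuclideanSpace ℝ (Fin d) := fun i => z i - z' i with hΔ
  set S2 : ℝ := ∑ i, ‖Δ i‖ ^ 2 with hS2
  have hS2nn : 0 ≤ S2 := Finset.sum_nonneg fun i _ => sq_nonneg _
  -- p_i ∈ [0,1]
  have hp01 : ∀ (v : EuclideanSpace ℝ (Fin n)) (i : Fin n), pbar v i ≤ 1 := by
    intro v i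
    obtain ⟨hnn, hsum⟩ := hpbarSimplex v
    calc pbar v i ≤ ∑ j, pbar v j :=
          Finset.single_le_sum (fun j _ => hnn j) (Finset.mem_univ i)
      _ = 1 := hsum
  -- gradient norm bound
  have hgbound : ∀ i x, ‖g i x‖ ≤ CL := fun i x =>
    grad_norm_le_of_lip hCL (hgrad i x) (hℓLip i)
  -- pointwise decomposition and bound
  have hpoint : ∀ i, ⟪F z i - F z' i, Δ i⟫
      ≤ Cgrad * ‖Δ i‖ ^ 2 + |p i - p' i| * (CL * ‖Δ i‖) := by
    intro i
    have hdecomp : F z i - F z' i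
        = p i • (g i (z i) - g i (z' i)) + (p i - p' i) • g i (z' i) := by
      rw [hF, hF]
      module
    rw [hdecomp, inner_add_left, real_inner_smul_left, real_inner_smul_left]
    have h1 : p i * ⟪g i (z i) - g i (z' i), Δ i⟫ ≤ Cgrad * ‖Δ i‖ ^ 2 := by
      have hcs : ⟪g i (z i) - g i (z' i), Δ i⟫ ≤ Cgrad * ‖Δ i‖ ^ 2 := by
        calc ⟪g i (z i) - g i (z' i), Δ i⟫ ≤ ‖g i (z i) - g i (z' i)‖ * ‖Δ i‖ :=
              real_inner_le_norm _ _
          _ ≤ (Cgrad * ‖Δ i‖) * ‖Δ i‖ :=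
              mul_le_mul_of_nonneg_right (hgLip i _ _) (norm_nonneg _)
          _ = Cgrad * ‖Δ i‖ ^ 2 := by ring
      rcases le_or_gt ⟪g i (z i) - g i (z' i), Δ i⟫ 0 with hneg | hpos
      · exact le_trans (mul_nonpos_of_nonneg_of_nonpos ((hpbarSimplex (L z)).1 i) hneg)
          (by positivity)
      · calc p i * ⟪g i (z i) - g i (z' i), Δ i⟫
            ≤ 1 * ⟪g i (z i) - g i (z' i), Δ i⟫ :=
              mul_le_mul_of_nonneg_right (hp01 _ i) hpos.le
          _ = _ := one_mul _
          _ ≤ Cgrad * ‖Δ i‖ ^ 2 := hcs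
    have h2 : (p i - p' i) * ⟪g i (z' i), Δ i⟫ ≤ |p i - p' i| * (CL * ‖Δ i‖) := by
      calc (p i - p' i) * ⟪g i (z' i), Δ i⟫ ≤ |(p i - p' i) * ⟪g i (z' i), Δ i⟫| :=
            le_abs_self _
        _ = |p i - p' i| * |⟪g i (z' i), Δ i⟫| := abs_mul _ _
        _ ≤ |p i - p' i| * (CL * ‖Δ i‖) := by
            refine mul_le_mul_of_nonneg_left ?_ (abs_nonneg _)
            calc |⟪g i (z' i), Δ i⟫| ≤ ‖g i (z' i)‖ * ‖Δ i‖ := abs_real_inner_le_norm _ _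
              _ ≤ CL * ‖Δ i‖ := mul_le_mul_of_nonneg_right (hgbound i _) (norm_nonneg _)
    linarith
  -- Cauchy–Schwarz on the correction term
  have hcs2 : ∑ i, |p i - p' i| * ‖Δ i‖ ≤ ‖p - p'‖ * Real.sqrt S2 := by
    have key := Finset.sum_mul_sq_le_sq_mul_sq Finset.univ
      (fun i => |p i - p' i|) (fun i => ‖Δ i‖)
    have h1 : Real.sqrt (∑ i, |p i - p' i| ^ 2) = ‖p - p'‖ := by
      rw [EuclideanSpace.norm_eq]
      congr 1
    have h2 : Real.sqrt (∑ i, ‖Δ i‖ ^ 2) = Real.sqrt S2 := rfl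
    calc ∑ i, |p i - p' i| * ‖Δ i‖
        ≤ Real.sqrt (∑ i, |p i - p' i| ^ 2) * Real.sqrt (∑ i, ‖Δ i‖ ^ 2) := by
          rw [← Real.sqrt_mul (Finset.sum_nonneg fun i _ => sq_nonneg _)]
          have hnn : 0 ≤ ∑ i, |p i - p' i| * ‖Δ i‖ :=
            Finset.sum_nonneg fun i _ => mul_nonneg (abs_nonneg _) (norm_nonneg _)
          calc ∑ i, |p i - p' i| * ‖Δ i‖
              = Real.sqrt ((∑ i, |p i - p' i| * ‖Δ i‖) ^ 2) := (Real.sqrt_sq hnn).symm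
            _ ≤ Real.sqrt ((∑ i, |p i - p' i| ^ 2) * ∑ i, ‖Δ i‖ ^ 2) := Real.sqrt_le_sqrt key
      _ = ‖p - p'‖ * Real.sqrt S2 := by rw [h1, h2]
  -- Lipschitz bound on ‖L z - L z'‖
  have hLnorm : ‖L z - L z'‖ ≤ CL * Real.sqrt S2 := by
    rw [EuclideanSpace.norm_eq]
    have hb : ∑ i, ‖(L z - L z') i‖ ^ 2 ≤ CL ^ 2 * S2 := by
      rw [hS2, Finset.mul_sum]
      refine Finset.sum_le_sum fun i _ => ?_
      have : ‖(L z - L z') i‖ = |ℓ i (z i) - ℓ i (z' i)| := by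
        simp [hL, Real.norm_eq_abs]
      rw [this]
      calc |ℓ i (z i) - ℓ i (z' i)| ^ 2 ≤ (CL * ‖z i - z' i‖) ^ 2 := by
            have := hℓLip i (z i) (z' i)
            exact pow_le_pow_left₀ (abs_nonneg _) this 2
        _ = CL ^ 2 * ‖Δ i‖ ^ 2 := by rw [hΔ]; ring
    calc Real.sqrt (∑ i, ‖(L z - L z') i‖ ^ 2) ≤ Real.sqrt (CL ^ 2 * S2) :=
          Real.sqrt_le_sqrt hb
      _ = CL * Real.sqrt S2 := by
          rw [Real.sqrt_mul (sq_nonneg _), Real.sqrt_sq hCL]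
  have hppLip : ‖p - p'‖ ≤ K * (CL * Real.sqrt S2) := by
    calc ‖p - p'‖ ≤ K * ‖L z - L z'‖ := hpbarLip _ _
      _ ≤ K * (CL * Real.sqrt S2) := mul_le_mul_of_nonneg_left hLnorm hK
  have hsqS2 : Real.sqrt S2 * Real.sqrt S2 = S2 := Real.mul_self_sqrt hS2nn
  -- combine
  calc ∑ i, ⟪F z i - F z' i, z i - z' i⟫
      ≤ ∑ i, (Cgrad * ‖Δ i‖ ^ 2 + |p i - p' i| * (CL * ‖Δ i‖)) :=
        Finset.sum_le_sum fun i _ => hpoint i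
    _ = Cgrad * S2 + CL * ∑ i, |p i - p' i| * ‖Δ i‖ := by
        rw [Finset.sum_add_distrib, hS2, Finset.mul_sum, Finset.mul_sum]
        congr 1
        exact Finset.sum_congr rfl fun i _ => by ring
    _ ≤ Cgrad * S2 + CL * (‖p - p'‖ * Real.sqrt S2) := by
        have := mul_le_mul_of_nonneg_left hcs2 hCL
        linarith
    _ ≤ Cgrad * S2 + CL * (K * (CL * Real.sqrt S2) * Real.sqrt S2) := by
        have h0 : 0 ≤ Real.sqrt S2 := Real.sqrt_nonneg _
        have := mul_le_mul_of_nonneg_right hppLip h0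
        nlinarith
    _ = Cgrad * S2 + K * CL ^ 2 * S2 := by
        have h : K * (CL * Real.sqrt S2) * Real.sqrt S2
            = K * CL * (Real.sqrt S2 * Real.sqrt S2) := by ring
        rw [h, hsqS2]; ring
    _ ≤ (K * CL ^ 2 + 2 * Cgrad) * S2 := by nlinarith
end
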